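/- Fix n : ℕ and let X be the complex matrix indexed by bit strings (Fin n → Bool) with X z k = 1 if hammingDist z k = 1 and X z k = 0 otherwise. Then for every real β and all bit strings z, k : Fin n → Bool, the (z,k) entry of Matrix.exp(−(i·β) • X) equals the product over l : Fin n of the factor (cos β : ℂ) if z l = k l and (−i · sin β) if z l ≠ k l. (This is the tensor-product form of the mixer: exp(−iβX)|z⟩ = ⊗_{l=1}^n (cos β |z_l⟩ − i sin β |z_l ⊕ 1⟩).) -/

import Mathlib

open Complex Matrix

section Aux

variable {n : ℕ}

/-- Flip the `l`-th bit of a bit string. -/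
def flp (l : Fin n) (k : Fin n → Bool) : Fin n → Bool := Function.update k l (!k l)

lemma flp_apply_self (l : Fin n) (k : Fin n → Bool) : flp l k l = !k l :=
  Function.update_self _ _ _

lemma flp_apply_ne (l m : Fin n) (k : Fin n → Bool) (h : m ≠ l) : flp l k m = k m :=
  Function.update_of_ne h _ _

lemma flp_flp (l : Fin n) (k : Fin n → Bool) : flp l (flp l k) = k := by
  funext m
  by_cases h : m = l
  · subst h; rw [flp_apply_self, flp_apply_self, Bool.not_not]
  · rw [flp_apply_ne _ _ _ h, flp_apply_ne _ _ _ h]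

lemma flp_eq_comm (l : Fin n) (z w : Fin n → Bool) : z = flp l w ↔ w = flp l z := by
  constructor
  · rintro rfl; rw [flp_flp]
  · rintro rfl; rw [flp_flp]

lemma flp_comm (l m : Fin n) (k : Fin n → Bool) : flp l (flp m k) = flp m (flp l k) := by
  by_cases h : l = m
  · subst h; rfl
  · funext j
    by_cases hj : j = l
    · subst hj
      rw [flp_apply_self, flp_apply_ne _ _ _ h, flp_apply_ne _ _ _ h, flp_apply_self]
    · by_cases hj' : j = m
      · subst hj'
        rw [flp_apply_ne _ _ _ hj, flp_apply_self, flp_apply_self,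
          flp_apply_ne _ _ _ hj]
      · rw [flp_apply_ne _ _ _ hj, flp_apply_ne _ _ _ hj', flp_apply_ne _ _ _ hj',
          flp_apply_ne _ _ _ hj]

lemma eq_flp_iff (z k : Fin n → Bool) (l : Fin n) :
    z = flp l k ↔ (z l ≠ k l ∧ hammingDist z k = 1) := by
  constructor
  · rintro rfl
    constructor
    · rw [flp_apply_self]; exact Bool.not_ne_self _
    · rw [hammingDist]
      have : ({i | flp l k i ≠ k i} : Finset (Fin n)) = {l} := by
        ext i
        simp only [Finset.mem_filter, Finset.mem_univ, true_and, Finset.mem_singleton]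
        constructor
        · intro hi
          by_contra hil
          exact hi (flp_apply_ne _ _ _ hil)
        · rintro rfl
          rw [flp_apply_self]; exact Bool.not_ne_self _
      rw [this, Finset.card_singleton]
  · rintro ⟨hl, hd⟩
    have hmem : l ∈ ({i | z i ≠ k i} : Finset (Fin n)) := by
      simp only [Finset.mem_filter, Finset.mem_univ, true_and]; exact hl
    have hsub : ({l} : Finset (Fin n)) ⊆ ({i | z i ≠ k i} : Finset (Fin n)) := by
      simpa using hmem
    have hset : ({i | z i ≠ k i} : Finset (Fin n)) = {l} := by
      refine (Finset.eq_of_subset_of_card_le hsub ?_).symm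
      rw [Finset.card_singleton]
      exact le_of_eq hd
    funext m
    by_cases hm : m = l
    · subst hm
      rw [flp_apply_self]
      revert hl; cases z m <;> cases k m <;> decide
    · rw [flp_apply_ne _ _ _ hm]
      by_contra hne
      have : m ∈ ({i | z i ≠ k i} : Finset (Fin n)) := by
        simp only [Finset.mem_filter, Finset.mem_univ, true_and]; exact hne
      rw [hset, Finset.mem_singleton] at this
      exact hm this

/-- The single-site bit-flip matrix. -/
def Am (l : Fin n) : Matrix (Fin n → Bool) (Fin n → Bool) ℂ :=
  Matrix.of fun z k => if z = flp l k then 1 else 0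

lemma Am_mul (l m : Fin n) :
    Am l * Am m = Matrix.of (fun z k => if z = flp l (flp m k) then (1:ℂ) else 0) := by
  ext z k
  rw [Matrix.mul_apply]
  simp only [Am, Matrix.of_apply, flp_eq_comm l z, mul_ite, mul_one, mul_zero, ite_mul,
    one_mul, zero_mul]
  rw [Finset.sum_ite_eq' Finset.univ (flp m k)]
  simp only [Finset.mem_univ, if_true]

lemma Am_commute (l m : Fin n) : Commute (Am l) (Am m) := by
  unfold Commute SemiconjBy
  rw [Am_mul, Am_mul]
  ext z k
  simp only [Matrix.of_apply]
  rw [flp_comm]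

lemma Am_sq (l : Fin n) : Am l * Am l = 1 := by
  rw [Am_mul]
  ext z k
  simp only [Matrix.of_apply]
  rw [flp_flp]
  simp [Matrix.one_apply]

lemma X_eq_sum :
    (Matrix.of (fun z k : Fin n → Bool =>
      if hammingDist z k = 1 then (1 : ℂ) else 0)) = ∑ l : Fin n, Am l := by
  ext z k
  rw [Matrix.sum_apply]
  simp only [Am, Matrix.of_apply, eq_flp_iff]
  by_cases hd : hammingDist z k = 1
  · simp only [hd, and_true, if_pos]
    rw [Finset.sum_boole]
    have : ({i | z i ≠ k i} : Finset (Fin n)).card = 1 := hd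
    norm_cast
    exact this.symm
  · simp [hd]

lemma exp_smul_of_sq_eq_one {N : Type*} [Fintype N] [DecidableEq N]
    (A : Matrix N N ℂ) (h : A * A = 1) (β : ℝ) :
    NormedSpace.exp ((-(Complex.I * β)) • A) =
      (Real.cos β : ℂ) • (1 : Matrix N N ℂ) + (-(Complex.I * Real.sin β)) • A := by
  letI : SeminormedRing (Matrix N N ℂ) := Matrix.linftyOpSemiNormedRing
  letI : NormedRing (Matrix N N ℂ) := Matrix.linftyOpNormedRing
  letI : NormedAlgebra ℂ (Matrix N N ℂ) := Matrix.linftyOpNormedAlgebra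
  rw [NormedSpace.exp_eq_tsum (𝕂 := ℂ)]
  refine HasSum.tsum_eq ?_
  have hsq : ∀ j : ℕ, ((-(Complex.I * β)) • A) ^ (2 * j) =
      ((-1 : ℂ) ^ j * (β : ℂ) ^ (2 * j)) • (1 : Matrix N N ℂ) := by
    intro j
    have h2 : ((-(Complex.I * (β:ℂ))) • A) ^ 2 = (-( (β:ℂ)^2)) • (1 : Matrix N N ℂ) := by
      have hA2 : A ^ 2 = 1 := by rw [pow_two, h]
      rw [smul_pow, hA2]
      congr 1
      have h3 : (-(Complex.I * (β:ℂ))) ^ 2 = Complex.I ^ 2 * (β:ℂ) ^ 2 := by ring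
      rw [h3, Complex.I_sq]; ring
    rw [pow_mul, h2, smul_pow, one_pow]
    congr 1
    rw [neg_pow, ← pow_mul]
  refine HasSum.even_add_odd ?_ ?_
  · have := ((Complex.hasSum_cos (β : ℂ)).smul_const (1 : Matrix N N ℂ))
    rw [← Complex.ofReal_cos] at this
    convert this using 2 with j
    · rfl
    rename_i j
    rw [hsq j, smul_smul]
    congr 1
    field_simp
  · have := (((Complex.hasSum_sin (β : ℂ)).mul_left (-Complex.I)).smul_const A)
    rw [← Complex.ofReal_sin] at this
    convert this using 2 with j
    · rfl
    · rename_i j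
      rw [pow_succ, hsq j, smul_mul_assoc, one_mul, smul_smul, smul_smul]
      congr 1
      field_simp
      ring
    · ring

/-- The single-site factor of the mixer. -/
noncomputable def Mm (β : ℝ) (l : Fin n) : Matrix (Fin n → Bool) (Fin n → Bool) ℂ :=
  (Real.cos β : ℂ) • 1 + (-(Complex.I * Real.sin β)) • Am l

lemma Mm_commute (β : ℝ) (l m : Fin n) : Commute (Mm β l) (Mm β m) := by
  unfold Commute SemiconjBy Mm
  simp only [add_mul, mul_add, smul_mul_assoc, mul_smul_comm, one_mul, mul_one, smul_smul]
  rw [(Am_commute l m).eq]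
  module

lemma Mm_pairwise (β : ℝ) (s : Finset (Fin n)) :
    (s : Set (Fin n)).Pairwise (Function.onFun Commute (Mm β)) :=
  fun x _ y _ _ => Mm_commute β x y

lemma key (β : ℝ) (k : Fin n → Bool) (s : Finset (Fin n)) : ∀ z : Fin n → Bool,
    (s.noncommProd (Mm β) (Mm_pairwise β s)) z k =
      if (∀ l, l ∉ s → z l = k l) then
        ∏ l ∈ s, (if z l = k l then (Real.cos β : ℂ) else -(Complex.I * Real.sin β))
      else 0 := by
  classical
  induction s using Finset.induction_on with
  | empty =>
    intro z
    simp only [Finset.noncommProd_empty, Finset.notMem_empty, Finset.prod_empty]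
    rw [Matrix.one_apply]
    by_cases h : z = k
    · subst h; simp
    · rw [if_neg h, if_neg]
      intro hall
      exact h (funext fun l => hall l (by simp))
  | @insert a s ha ih =>
    intro z
    rw [Finset.noncommProd_insert_of_notMem _ _ _ (Mm_pairwise β _) ha]
    rw [Matrix.mul_apply]
    have hMm : ∀ w, Mm β a z w = (if w = z then (Real.cos β : ℂ) else 0) +
        (if w = flp a z then -(Complex.I * Real.sin β) else 0) := by
      intro w
      simp only [Mm, Matrix.add_apply, Matrix.smul_apply, Matrix.one_apply, Am,
        Matrix.of_apply, smul_eq_mul, mul_ite, mul_one, mul_zero]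
      congr 1
      · congr 1; simp [eq_comm]
      · congr 1; simp [flp_eq_comm a z w, eq_comm]
    simp only [hMm, add_mul, ite_mul, zero_mul, Finset.sum_add_distrib,
      Finset.sum_ite_eq' Finset.univ, Finset.mem_univ, if_true]
    rw [ih z, ih (flp a z)]
    by_cases hz : z a = k a
    · have h2 : ¬ (∀ l, l ∉ s → flp a z l = k l) := by
        intro hall
        have := hall a ha
        rw [flp_apply_self, hz] at this
        exact (Bool.not_ne_self (k a)) this
      rw [if_neg h2, mul_zero, add_zero]
      have hiff : (∀ l, l ∉ s → z l = k l) ↔ (∀ l, l ∉ insert a s → z l = k l) := by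
        constructor
        · intro h l hl
          exact h l (fun hls => hl (Finset.mem_insert_of_mem hls))
        · intro h l hls
          by_cases hla : l = a
          · subst hla; exact hz
          · exact h l (by simp [hla, hls])
      rw [Finset.prod_insert ha, if_pos hz]
      by_cases hc : ∀ l, l ∉ insert a s → z l = k l
      · rw [if_pos hc, if_pos (hiff.mpr hc)]
      · rw [if_neg hc, if_neg (fun h => hc (hiff.mp h)), mul_zero]
    · have h2 : ¬ (∀ l, l ∉ s → z l = k l) := fun hall => hz (hall a ha)
      rw [if_neg h2, mul_zero, zero_add]
      have hflip : flp a z a = k a := by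
        rw [flp_apply_self]
        revert hz; cases z a <;> cases k a <;> decide
      have hiff : (∀ l, l ∉ s → flp a z l = k l) ↔ (∀ l, l ∉ insert a s → z l = k l) := by
        constructor
        · intro h l hl
          have hls : l ∉ s := fun hls => hl (Finset.mem_insert_of_mem hls)
          have hla : l ≠ a := fun e => hl (e ▸ Finset.mem_insert_self a s)
          rw [← flp_apply_ne a l z hla]
          exact h l hls
        · intro h l hls
          by_cases hla : l = a
          · subst hla; exact hflip
          · rw [flp_apply_ne _ _ _ hla]
            exact h l (by simp [hla, hls])
      have hprod : (∏ l ∈ s, (if flp a z l = k l then (Real.cos β : ℂ)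
          else -(Complex.I * Real.sin β))) =
          ∏ l ∈ s, (if z l = k l then (Real.cos β : ℂ) else -(Complex.I * Real.sin β)) := by
        refine Finset.prod_congr rfl (fun l hl => ?_)
        rw [flp_apply_ne a l z (fun e => ha (e ▸ hl))]
      rw [Finset.prod_insert ha, if_neg hz, hprod]
      by_cases hc : ∀ l, l ∉ insert a s → z l = k l
      · rw [if_pos hc, if_pos (hiff.mpr hc)]
      · rw [if_neg hc, if_neg (fun h => hc (hiff.mp h)), mul_zero]

end Aux

theorem exp_mixer_entry_prod (n : ℕ) (β : ℝ) (z k : Fin n → Bool) :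
    (NormedSpace.exp ((-(Complex.I * β)) •
        (Matrix.of (fun z k : Fin n → Bool =>
          if hammingDist z k = 1 then (1 : ℂ) else 0)))) z k =
      ∏ l : Fin n, (if z l = k l then (Real.cos β : ℂ) else -(Complex.I * Real.sin β)) := by
  rw [X_eq_sum, Finset.smul_sum]
  rw [Matrix.exp_sum_of_commute Finset.univ (fun l => (-(Complex.I * (β:ℂ))) • Am l)
    (fun x _ y _ _ => ((Am_commute x y).smul_left _).smul_right _)]
  have hexp : ∀ x ∈ (Finset.univ : Finset (Fin n)), NormedSpace.exp ((-(Complex.I * (β:ℂ))) • Am x) = Mm β x :=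
    fun x _ => exp_smul_of_sq_eq_one (Am x) (Am_sq x) β
  rw [Finset.noncommProd_congr rfl hexp (fun x hx y hy _ => by
    simp only [Function.onFun]
    rw [hexp x (Finset.mem_univ x), hexp y (Finset.mem_univ y)]
    exact Mm_commute β x y)]
  rw [key β k Finset.univ z]
  rw [if_pos (fun l hl => absurd (Finset.mem_univ l) hl)]
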